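/- Let X_{n,k} be the total number of records with respect to a uniform random composition of n into k parts: conditionally on the composition (b_1,…,b_k), X_{n,k} is a sum of k independent random variables where the i-th has the distribution of the number of records in a uniform i.i.d. sample of size b_i (equivalently P[Z_m = j] = s(m,j)/m!). Then P[X_{n,k} = j] = s(n,j)·S(j,k)/L(n,k) for j ∈ {k,…,n}, i.e., X_{n,k} has the Lah distribution Lah(n,k). -/

import Mathlib

/-- Unsigned Stirling numbers of the first kind. -/
def stirling1 : ℕ → ℕ → ℕ
  | 0, 0 => 1
  | 0, _ + 1 => 0
  | _ + 1, 0 => 0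
  | n + 1, k + 1 => stirling1 n k + n * stirling1 n (k + 1)

/-- Stirling numbers of the second kind. -/
def stirling2 : ℕ → ℕ → ℕ
  | 0, 0 => 1
  | 0, _ + 1 => 0
  | _ + 1, 0 => 0
  | n + 1, k + 1 => stirling2 n k + (k + 1) * stirling2 n (k + 1)

open scoped BigOperators

/-- The compositions of `n` into `k` positive parts, encoded as functions `Fin k → Fin (n+1)`
with all parts positive and summing to `n`. -/
def compositions (n k : ℕ) : Finset (Fin k → Fin (n + 1)) :=
  Finset.univ.filter fun c => (∀ t, 1 ≤ (c t : ℕ)) ∧ (∑ t, (c t : ℕ)) = n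

/-- The Lah number `L(n,k) = (n!/k!)·C(n-1,k-1)`, as a rational number. -/
noncomputable def lahNumber (n k : ℕ) : ℚ :=
  (n.factorial : ℚ) / (k.factorial : ℚ) * ((n - 1).choose (k - 1) : ℚ)

/-- `P[X_{n,k} = j]`: averaging over the uniform random composition `(b_1,…,b_k)` of `n`
into `k` parts, the probability that independent record counts `Z_{b_1} + ⋯ + Z_{b_k}`
(with `P[Z_m = l] = s(m,l)/m!`) sum to `j`. -/
noncomputable def recordCountProb (n k j : ℕ) : ℚ :=
  (((n - 1).choose (k - 1) : ℚ))⁻¹ *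
    ∑ c ∈ compositions n k,
      ∑ g ∈ Finset.univ.filter fun g : Fin k → Fin (j + 1) => (∑ t, (g t : ℕ)) = j,
        ∏ i, (stirling1 (c i) (g i) : ℚ) / ((c i : ℕ).factorial : ℚ)


open Finset

section helpers

lemma stirling1_succ_succ (n k : ℕ) :
    stirling1 (n+1) (k+1) = stirling1 n k + n * stirling1 n (k + 1) := rfl

lemma stirling2_succ_succ (n k : ℕ) :
    stirling2 (n+1) (k+1) = stirling2 n k + (k + 1) * stirling2 n (k + 1) := rfl

lemma stirling1_zero_left (l : ℕ) : stirling1 0 l = if l = 0 then 1 else 0 := by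
  cases l <;> rfl

lemma stirling1_zero_right (n : ℕ) : stirling1 n 0 = if n = 0 then 1 else 0 := by
  cases n <;> rfl

lemma stirling2_zero_left (l : ℕ) : stirling2 0 l = if l = 0 then 1 else 0 := by
  cases l <;> rfl

lemma stirling2_zero_right (n : ℕ) : stirling2 n 0 = if n = 0 then 1 else 0 := by
  cases n <;> rfl

lemma stirling2_one (m : ℕ) : stirling2 m 1 = if m = 0 then 0 else 1 := by
  induction m with
  | zero => rfl
  | succ m ih =>
    show stirling2 m 0 + 1 * stirling2 m 1 = _
    cases m with
    | zero => rfl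
    | succ m => simp [stirling2_zero_right, ih] at *


/-- "Derivative" decomposition of a binomial convolution. -/
lemma binom_conv_succ (f g : ℕ → ℕ) (n : ℕ) :
    ∑ a ∈ range (n+2), (n+1).choose a * (f a * g (n+1-a))
      = (∑ a ∈ range (n+1), n.choose a * (f (a+1) * g (n-a)))
      + ∑ a ∈ range (n+1), n.choose a * (f a * g (n+1-a)) := by
  rw [Finset.sum_range_succ' (fun a => (n+1).choose a * (f a * g (n+1-a))) (n+1)]
  rw [Finset.sum_range_succ' (fun a => n.choose a * (f a * g (n+1-a))) n]
  simp only [Nat.succ_sub_succ, Nat.choose_succ_succ, Nat.choose_zero_right, Nat.sub_zero,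
    add_mul, Finset.sum_add_distrib, one_mul]
  rw [Finset.sum_range_succ (fun b => n.choose (b+1) * (f (b+1) * g (n-b))) n]
  simp [Nat.choose_succ_self]
  ring


lemma stirling1_conv (n : ℕ) : ∀ p q : ℕ,
    ∑ a ∈ range (n+1), n.choose a * (stirling1 a p * stirling1 (n-a) q)
      = (p+q).choose p * stirling1 n (p+q) := by
  induction n with
  | zero =>
    intro p q
    cases p <;> cases q <;> simp [stirling1_zero_left]
  | succ n ih =>
    intro p q
    match p, q with
    | 0, q =>
      rw [Finset.sum_eq_single 0]
      · simp [stirling1_zero_left]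
      · intro b _ hb
        simp [stirling1_zero_right, hb]
      · simp
    | p+1, 0 =>
      rw [Finset.sum_eq_single (n+1)]
      · simp [stirling1_zero_right]
      · intro b hb hbne
        have : n + 1 - b ≠ 0 := by
          simp only [mem_range] at hb; omega
        simp [stirling1_zero_right, this]
      · simp
    | p+1, q+1 =>
      rw [show n + 1 + 1 = n + 2 from rfl,
        binom_conv_succ (fun a => stirling1 a (p+1)) (fun b => stirling1 b (q+1)) n]
      have e1 : ∀ a ∈ range (n+1),
          n.choose a * (stirling1 (a+1) (p+1) * stirling1 (n-a) (q+1))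
          = n.choose a * (stirling1 a p * stirling1 (n-a) (q+1))
            + a * (n.choose a * (stirling1 a (p+1) * stirling1 (n-a) (q+1))) := by
        intro a _
        rw [stirling1_succ_succ]; ring
      have e2 : ∀ a ∈ range (n+1),
          n.choose a * (stirling1 a (p+1) * stirling1 (n+1-a) (q+1))
          = n.choose a * (stirling1 a (p+1) * stirling1 (n-a) q)
            + (n-a) * (n.choose a * (stirling1 a (p+1) * stirling1 (n-a) (q+1))) := by
        intro a ha
        simp only [mem_range] at ha
        have : n + 1 - a = (n - a) + 1 := by omega
        rw [this, stirling1_succ_succ]; ring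
      rw [Finset.sum_congr rfl e1, Finset.sum_congr rfl e2,
        Finset.sum_add_distrib, Finset.sum_add_distrib]
      have e3 : ∑ a ∈ range (n+1), ((a : ℕ) * (n.choose a * (stirling1 a (p+1) * stirling1 (n-a) (q+1)))
            + (n-a) * (n.choose a * (stirling1 a (p+1) * stirling1 (n-a) (q+1))))
          = n * ((p+1+(q+1)).choose (p+1) * stirling1 n (p+1+(q+1))) := by
        rw [← ih (p+1) (q+1)]
        rw [Finset.mul_sum]
        refine Finset.sum_congr rfl fun a ha => ?_
        simp only [mem_range] at ha
        have : a + (n - a) = n := by omega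
        rw [← add_mul, this]
      have := e3
      rw [ih p (q+1), ih (p+1) q]
      -- now pure arithmetic
      have hth : ∑ a ∈ range (n+1), (a * (n.choose a * (stirling1 a (p+1) * stirling1 (n-a) (q+1))))
          + ∑ a ∈ range (n+1), ((n-a) * (n.choose a * (stirling1 a (p+1) * stirling1 (n-a) (q+1))))
          = n * ((p+1+(q+1)).choose (p+1) * stirling1 n (p+1+(q+1))) := by
        rw [← Finset.sum_add_distrib]; exact e3
      rw [show (p + (q+1)) = p + q + 1 by ring, show (p+1+q) = p+q+1 by ring,
        show (p+1+(q+1)) = p+q+2 by ring] at *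
      rw [add_add_add_comm, hth]
      rw [show (n+1 : ℕ) = n + 1 from rfl]
      rw [show stirling1 (n+1) (p+q+2) = stirling1 n (p+q+1) + n * stirling1 n (p+q+2) from
        stirling1_succ_succ n (p+q+1)]
      rw [show (p+q+2).choose (p+1) = (p+q+1).choose p + (p+q+1).choose (p+1) from
        Nat.choose_succ_succ' (p+q+1) p ▸ rfl]
      ring


def pos01 (l : ℕ) : ℕ := if l = 0 then 0 else 1

lemma surj_rec (j : ℕ) : ∀ k : ℕ,
    ∑ l ∈ range (j+1), j.choose l * (pos01 l * stirling2 (j-l) k)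
      = (k+1) * stirling2 j (k+1) := by
  induction j with
  | zero => intro k; simp [pos01, stirling2_zero_left]
  | succ j ih =>
    intro k
    rw [show j + 1 + 1 = j + 2 from rfl, binom_conv_succ pos01 (fun m => stirling2 m k) j]
    have h1 : ∑ l ∈ range (j+1), j.choose l * (pos01 (l+1) * stirling2 (j-l) k)
        = ∑ l ∈ range (j+1), j.choose l * (pos01 l * stirling2 (j-l) k)
          + stirling2 j k := by
      rw [Finset.sum_range_succ' (fun l => j.choose l * (pos01 (l+1) * stirling2 (j-l) k)) j,
        Finset.sum_range_succ' (fun l => j.choose l * (pos01 l * stirling2 (j-l) k)) j]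
      simp [pos01]
    cases k with
    | zero =>
      have h2 : ∀ l ∈ range (j+1), j.choose l * (pos01 l * stirling2 (j+1-l) 0) = 0 := by
        intro l hl
        simp only [mem_range] at hl
        have : j + 1 - l ≠ 0 := by omega
        simp [stirling2_zero_right, this]
      rw [Finset.sum_congr rfl h2, h1, ih 0]
      simp only [stirling2_one, stirling2_succ_succ, stirling2_zero_right]
      split <;> simp [Nat.add_comm]
    | succ k =>
      have h2 : ∀ l ∈ range (j+1), j.choose l * (pos01 l * stirling2 (j+1-l) (k+1))
          = j.choose l * (pos01 l * stirling2 (j-l) k)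
            + (k+1) * (j.choose l * (pos01 l * stirling2 (j-l) (k+1))) := by
        intro l hl
        simp only [mem_range] at hl
        rw [show j + 1 - l = (j - l) + 1 by omega, stirling2_succ_succ]
        ring
      rw [Finset.sum_congr rfl h2, Finset.sum_add_distrib, h1, ih (k+1), ih k,
        ← Finset.mul_sum, ih (k+1), stirling2_succ_succ]
      ring


lemma sum_antidiagonalTuple_succ {M : Type*} [AddCommMonoid M] (k n : ℕ)
    (h : (Fin (k+1) → ℕ) → M) :
    ∑ x ∈ Finset.Nat.antidiagonalTuple (k+1) n, h x
      = ∑ m ∈ range (n+1), ∑ t ∈ Finset.Nat.antidiagonalTuple k (n-m), h (Fin.cons m t) := by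
  rw [← Finset.sum_sigma (range (n+1)) (fun m => Finset.Nat.antidiagonalTuple k (n-m))
    (fun p => h (Fin.cons p.1 p.2))]
  refine Finset.sum_nbij' (fun x : Fin (k+1) → ℕ => (⟨x 0, Fin.tail x⟩ : (_ : ℕ) × (Fin k → ℕ)))
    (fun p : (_ : ℕ) × (Fin k → ℕ) => Fin.cons p.1 p.2) ?_ ?_ ?_ ?_ ?_
  · intro x hx
    rw [Finset.Nat.mem_antidiagonalTuple] at hx
    simp only [Finset.mem_sigma, Finset.mem_range, Finset.Nat.mem_antidiagonalTuple]
    rw [Fin.sum_univ_succ] at hx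
    have ht : ∑ i, Fin.tail x i = ∑ i : Fin k, x i.succ := rfl
    refine ⟨by omega, by rw [ht]; omega⟩
  · intro p hp
    rw [Finset.mem_sigma, Finset.mem_range, Finset.Nat.mem_antidiagonalTuple] at hp
    rw [Finset.Nat.mem_antidiagonalTuple, Fin.sum_univ_succ]
    simp only [Fin.cons_zero, Fin.cons_succ]
    omega
  · intro x _; exact Fin.cons_self_tail x
  · intro p _
    simp [Fin.tail_cons]
  · intro x _
    rw [show (Fin.cons (x 0) (Fin.tail x) : Fin (k+1) → ℕ) = x from Fin.cons_self_tail x]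


noncomputable def q1 (a b : ℕ) : ℚ :=
  (if 1 ≤ a then 1 else 0) * ((stirling1 a b : ℚ) / ((a.factorial : ℕ) : ℚ))

noncomputable def Tsum (n k j : ℕ) : ℚ :=
  ∑ c ∈ Finset.Nat.antidiagonalTuple k n,
    ∑ g ∈ Finset.Nat.antidiagonalTuple k j, ∏ i, q1 (c i) (g i)

lemma Tsum_zero (n j : ℕ) :
    Tsum n 0 j = if n = 0 ∧ j = 0 then 1 else 0 := by
  unfold Tsum
  match n, j with
  | 0, 0 => simp [Finset.Nat.antidiagonalTuple_zero_zero]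
  | 0, j+1 => simp [Finset.Nat.antidiagonalTuple_zero_zero, Finset.Nat.antidiagonalTuple_zero_succ]
  | n+1, j => simp [Finset.Nat.antidiagonalTuple_zero_succ]

lemma Tsum_succ (n k j : ℕ) :
    Tsum n (k+1) j = ∑ m ∈ range (n+1), ∑ l ∈ range (j+1),
      q1 m l * Tsum (n-m) k (j-l) := by
  unfold Tsum
  rw [sum_antidiagonalTuple_succ]
  refine Finset.sum_congr rfl fun m _ => ?_
  have inner : ∀ t : Fin k → ℕ,
      ∑ g ∈ Finset.Nat.antidiagonalTuple (k+1) j, ∏ i, q1 ((Fin.cons m t : Fin (k+1) → ℕ) i) (g i)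
        = ∑ l ∈ range (j+1), q1 m l *
            ∑ g' ∈ Finset.Nat.antidiagonalTuple k (j-l), ∏ i, q1 (t i) (g' i) := by
    intro t
    rw [sum_antidiagonalTuple_succ]
    refine Finset.sum_congr rfl fun l _ => ?_
    rw [Finset.mul_sum]
    refine Finset.sum_congr rfl fun g' _ => ?_
    rw [Fin.prod_univ_succ]
    simp [Fin.cons_zero, Fin.cons_succ]
  rw [Finset.sum_congr rfl fun t _ => inner t]
  rw [Finset.sum_comm]
  refine Finset.sum_congr rfl fun l _ => ?_
  rw [Finset.mul_sum]


lemma big_nat (n k j : ℕ) :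
    ∑ l ∈ range (j+1), ∑ m ∈ range (n+1),
        pos01 m * (n.choose m * (stirling1 m l * (stirling1 (n-m) (j-l) * stirling2 (j-l) k)))
      = stirling1 n j * ((k+1) * stirling2 j (k+1)) := by
  -- add the m = 0 terms to both sides
  have key : ∀ l ∈ range (j+1),
      (∑ m ∈ range (n+1),
        pos01 m * (n.choose m * (stirling1 m l * (stirling1 (n-m) (j-l) * stirling2 (j-l) k))))
      + (if l = 0 then 1 else 0) * (stirling1 n j * stirling2 j k)
      = j.choose l * (stirling1 n j * stirling2 (j-l) k) := by
    intro l hl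
    simp only [mem_range] at hl
    have hfull : ∑ m ∈ range (n+1),
        n.choose m * (stirling1 m l * (stirling1 (n-m) (j-l) * stirling2 (j-l) k))
        = j.choose l * (stirling1 n j * stirling2 (j-l) k) := by
      have : ∀ m ∈ range (n+1),
          n.choose m * (stirling1 m l * (stirling1 (n-m) (j-l) * stirling2 (j-l) k))
          = (n.choose m * (stirling1 m l * stirling1 (n-m) (j-l))) * stirling2 (j-l) k := by
        intro m _; ring
      rw [Finset.sum_congr rfl this, ← Finset.sum_mul, stirling1_conv n l (j-l),
        show l + (j - l) = j by omega]
      ring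
    have hsplit : ∀ (F : ℕ → ℕ), ∑ m ∈ range (n+1), pos01 m * F m + F 0
        = ∑ m ∈ range (n+1), F m := by
      intro F
      rw [Finset.sum_range_succ' (fun m => pos01 m * F m) n,
        Finset.sum_range_succ' F n]
      simp [pos01]
    have e0 : (if l = 0 then 1 else 0) * (stirling1 n j * stirling2 j k)
        = n.choose 0 * (stirling1 0 l * (stirling1 (n-0) (j-l) * stirling2 (j-l) k)) := by
      rcases Nat.eq_zero_or_pos l with rfl | hp
      · simp [stirling1_zero_left]
      · have : l ≠ 0 := by omega
        simp [stirling1_zero_left, this]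
    rw [e0, hsplit (fun m => n.choose m * (stirling1 m l * (stirling1 (n-m) (j-l) * stirling2 (j-l) k))), hfull]
  -- sum key over l
  have hsum := Finset.sum_congr rfl key
  rw [Finset.sum_add_distrib] at hsum
  have h0 : ∑ l ∈ range (j+1), (if l = 0 then 1 else 0) * (stirling1 n j * stirling2 j k)
      = stirling1 n j * stirling2 j k := by
    rw [Finset.sum_eq_single 0] <;> simp +contextual
  have hR : ∑ l ∈ range (j+1), j.choose l * (stirling1 n j * stirling2 (j-l) k)
      = stirling1 n j * ((k+1) * stirling2 j (k+1)) + stirling1 n j * stirling2 j k := by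
    have e1 : ∀ l ∈ range (j+1), j.choose l * (stirling1 n j * stirling2 (j-l) k)
        = stirling1 n j * (j.choose l * (pos01 l * stirling2 (j-l) k))
          + (if l = 0 then 1 else 0) * (stirling1 n j * stirling2 j k) := by
      intro l _
      rcases Nat.eq_zero_or_pos l with rfl | hp
      · simp [pos01]
      · have h1 : l ≠ 0 := by omega
        simp only [pos01, if_neg h1]
        ring
    rw [Finset.sum_congr rfl e1, Finset.sum_add_distrib, h0, ← Finset.mul_sum, surj_rec j k]
  rw [h0, hR] at hsum
  omega


lemma pos01_cast (m : ℕ) : ((pos01 m : ℕ) : ℚ) = if 1 ≤ m then 1 else 0 := by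
  unfold pos01
  cases m <;> simp

lemma Tsum_eq (k : ℕ) : ∀ n j, Tsum n k j
    = (stirling1 n j : ℚ) * (stirling2 j k : ℚ) * (k.factorial : ℚ) / (n.factorial : ℚ) := by
  induction k with
  | zero =>
    intro n j
    rw [Tsum_zero]
    rcases Nat.eq_zero_or_pos j with rfl | hj
    · rcases Nat.eq_zero_or_pos n with rfl | hn
      · norm_num [stirling1_zero_right, stirling2_zero_right]
      · have : n ≠ 0 := by omega
        simp [this, stirling1_zero_right, stirling2_zero_right]
    · have : j ≠ 0 := by omega
      simp [this, stirling2_zero_right]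
  | succ k ih =>
    intro n j
    rw [Tsum_succ]
    have step : ∀ m ∈ range (n+1), ∀ l ∈ range (j+1),
        q1 m l * Tsum (n-m) k (j-l)
        = ((pos01 m * (n.choose m * (stirling1 m l * (stirling1 (n-m) (j-l) * stirling2 (j-l) k))) : ℕ) : ℚ)
            * (k.factorial : ℚ) / (n.factorial : ℚ) := by
      intro m hm l hl
      simp only [mem_range] at hm hl
      have hmn : m ≤ n := by omega
      rw [ih (n-m) (j-l)]
      unfold q1
      push_cast
      rw [Nat.cast_choose ℚ hmn, pos01_cast]
      have f1 : ((m.factorial : ℕ) : ℚ) ≠ 0 := Nat.cast_ne_zero.mpr m.factorial_ne_zero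
      have f2 : (((n-m).factorial : ℕ) : ℚ) ≠ 0 := Nat.cast_ne_zero.mpr (n-m).factorial_ne_zero
      have f3 : ((n.factorial : ℕ) : ℚ) ≠ 0 := Nat.cast_ne_zero.mpr n.factorial_ne_zero
      field_simp
    rw [Finset.sum_congr rfl (fun m hm => Finset.sum_congr rfl (step m hm))]
    simp only [← Finset.sum_div, ← Finset.sum_mul]
    have cast_eq : (∑ m ∈ range (n+1), ∑ l ∈ range (j+1),
        ((pos01 m * (n.choose m * (stirling1 m l * (stirling1 (n-m) (j-l) * stirling2 (j-l) k))) : ℕ) : ℚ))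
        = ((∑ l ∈ range (j+1), ∑ m ∈ range (n+1),
            pos01 m * (n.choose m * (stirling1 m l * (stirling1 (n-m) (j-l) * stirling2 (j-l) k))) : ℕ) : ℚ) := by
      push_cast
      rw [Finset.sum_comm]
    rw [cast_eq, big_nat]
    push_cast [Nat.factorial_succ]
    ring


lemma fin_sum_eq {k j : ℕ} (F : (Fin k → ℕ) → ℚ) :
    ∑ g ∈ Finset.univ.filter fun g : Fin k → Fin (j + 1) => (∑ t, (g t : ℕ)) = j,
        F (fun i => (g i : ℕ))
      = ∑ x ∈ Finset.Nat.antidiagonalTuple k j, F x := by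
  refine Finset.sum_nbij' (fun g : Fin k → Fin (j+1) => fun i => (g i : ℕ))
    (fun x : Fin k → ℕ => fun i => (⟨min (x i) j, by omega⟩ : Fin (j+1))) ?_ ?_ ?_ ?_ ?_
  · intro g hg
    simp only [mem_filter, mem_univ, true_and] at hg
    rw [Finset.Nat.mem_antidiagonalTuple]
    exact hg
  · intro x hx
    rw [Finset.Nat.mem_antidiagonalTuple] at hx
    simp only [mem_filter, mem_univ, true_and]
    have hle : ∀ i, x i ≤ j := by
      intro i
      calc x i ≤ ∑ t, x t := Finset.single_le_sum (fun t _ => Nat.zero_le _) (mem_univ i)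
      _ = j := hx
    calc (∑ t, ((⟨min (x t) j, by omega⟩ : Fin (j+1)) : ℕ)) = ∑ t, x t := by
          refine Finset.sum_congr rfl fun t _ => ?_
          simp [Nat.min_eq_left (hle t)]
      _ = j := hx
  · intro g hg
    simp only [mem_filter, mem_univ, true_and] at hg
    funext i
    have hle : (g i : ℕ) ≤ j := by
      calc (g i : ℕ) ≤ ∑ t, (g t : ℕ) := Finset.single_le_sum (f := fun t => (g t : ℕ)) (fun t _ => Nat.zero_le _) (mem_univ i)
      _ = j := hg
    ext
    simp [Nat.min_eq_left hle]
  · intro x hx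
    rw [Finset.Nat.mem_antidiagonalTuple] at hx
    have hle : ∀ i, x i ≤ j := by
      intro i
      calc x i ≤ ∑ t, x t := Finset.single_le_sum (fun t _ => Nat.zero_le _) (mem_univ i)
      _ = j := hx
    funext i
    simp [Nat.min_eq_left (hle i)]
  · intro g _; rfl

lemma glue (n k j : ℕ) :
    ∑ c ∈ compositions n k,
      ∑ g ∈ Finset.univ.filter fun g : Fin k → Fin (j + 1) => (∑ t, (g t : ℕ)) = j,
        ∏ i, (stirling1 (c i) (g i) : ℚ) / (((c i : ℕ)).factorial : ℚ)
      = Tsum n k j := by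
  have step1 : ∑ c ∈ compositions n k,
      ∑ g ∈ Finset.univ.filter fun g : Fin k → Fin (j + 1) => (∑ t, (g t : ℕ)) = j,
        ∏ i, (stirling1 (c i) (g i) : ℚ) / (((c i : ℕ)).factorial : ℚ)
      = ∑ c ∈ (Finset.Nat.antidiagonalTuple k n).filter (fun c => ∀ i, 1 ≤ c i),
        ∑ x ∈ Finset.Nat.antidiagonalTuple k j,
          ∏ i, (stirling1 (c i) (x i) : ℚ) / (((c i)).factorial : ℚ) := by
    refine Finset.sum_nbij' (fun c : Fin k → Fin (n+1) => fun i => (c i : ℕ))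
      (fun c : Fin k → ℕ => fun i => (⟨min (c i) n, by omega⟩ : Fin (n+1))) ?_ ?_ ?_ ?_ ?_
    · intro c hc
      simp only [compositions, mem_filter, mem_univ, true_and] at hc
      simp only [mem_filter, Finset.Nat.mem_antidiagonalTuple]
      exact ⟨hc.2, hc.1⟩
    · intro c hc
      simp only [mem_filter, Finset.Nat.mem_antidiagonalTuple] at hc
      simp only [compositions, mem_filter, mem_univ, true_and]
      have hle : ∀ i, c i ≤ n := by
        intro i
        calc c i ≤ ∑ t, c t := Finset.single_le_sum (fun t _ => Nat.zero_le _) (mem_univ i)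
        _ = n := hc.1
      have hcoe : ∀ t, ((⟨min (c t) n, by omega⟩ : Fin (n+1)) : ℕ) = c t := by
        intro t; simp [Nat.min_eq_left (hle t)]
      constructor
      · intro t; have h1 := hc.2 t; have h2 := hle t; omega
      · rw [Finset.sum_congr rfl (fun t _ => Nat.min_eq_left (hle t))]; exact hc.1
    · intro c hc
      simp only [compositions, mem_filter, mem_univ, true_and] at hc
      have hle : ∀ i, (c i : ℕ) ≤ n := by
        intro i
        calc (c i : ℕ) ≤ ∑ t, (c t : ℕ) := Finset.single_le_sum (f := fun t => (c t : ℕ)) (fun t _ => Nat.zero_le _) (mem_univ i)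
        _ = n := hc.2
      funext i
      ext
      simp [Nat.min_eq_left (hle i)]
    · intro c hc
      simp only [mem_filter, Finset.Nat.mem_antidiagonalTuple] at hc
      have hle : ∀ i, c i ≤ n := by
        intro i
        calc c i ≤ ∑ t, c t := Finset.single_le_sum (fun t _ => Nat.zero_le _) (mem_univ i)
        _ = n := hc.1
      funext i
      simp [Nat.min_eq_left (hle i)]
    · intro c _
      exact fin_sum_eq (fun x => ∏ i, (stirling1 ((c i : ℕ)) (x i) : ℚ) / (((c i : ℕ)).factorial : ℚ))
  rw [step1]
  unfold Tsum
  rw [← Finset.sum_filter_add_sum_filter_not (Finset.Nat.antidiagonalTuple k n)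
    (fun c => ∀ i, 1 ≤ c i)]
  have hz : ∑ c ∈ (Finset.Nat.antidiagonalTuple k n).filter (fun c => ¬ ∀ i, 1 ≤ c i),
      ∑ g ∈ Finset.Nat.antidiagonalTuple k j, ∏ i, q1 (c i) (g i) = 0 := by
    refine Finset.sum_eq_zero fun c hc => ?_
    simp only [mem_filter, not_forall] at hc
    obtain ⟨i, hi⟩ := hc.2
    refine Finset.sum_eq_zero fun g _ => ?_
    refine Finset.prod_eq_zero (mem_univ i) ?_
    unfold q1
    rw [if_neg hi, zero_mul]
  rw [hz, add_zero]
  refine Finset.sum_congr rfl fun c hc => ?_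
  simp only [mem_filter] at hc
  refine Finset.sum_congr rfl fun g _ => ?_
  refine Finset.prod_congr rfl fun i _ => ?_
  unfold q1
  rw [if_pos (hc.2 i), one_mul]


end helpers

theorem stmt_15 (n k j : ℕ) (hk : 1 ≤ k) (hkn : k ≤ n) (hkj : k ≤ j) (hjn : j ≤ n) :
    recordCountProb n k j = (stirling1 n j : ℚ) * (stirling2 j k : ℚ) / lahNumber n k := by
  have hC : 0 < (n-1).choose (k-1) := Nat.choose_pos (by omega)
  have hCq : (((n-1).choose (k-1) : ℕ) : ℚ) ≠ 0 := by positivity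
  have hnq : ((n.factorial : ℕ) : ℚ) ≠ 0 := Nat.cast_ne_zero.mpr n.factorial_ne_zero
  have hkq : ((k.factorial : ℕ) : ℚ) ≠ 0 := Nat.cast_ne_zero.mpr k.factorial_ne_zero
  unfold recordCountProb lahNumber
  rw [glue, Tsum_eq]
  field_simp
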